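/- There exists an absolute constant C > 0 such that for every f in the Zygmund class Λ_*, every h > 0 and every x, t ∈ ℝ with |x − t| > h/2, one has |Δ₁f(x,h) − Δ₁f(t,h)| ≤ C ‖f‖_* log(|x−t|/h + 1). -/

import Mathlib

noncomputable section
open MeasureTheory
open scoped ENNReal NNReal

/-- Second divided difference `Δ₂f(x,h) = (f(x+h) - 2f(x) + f(x-h))/h`. -/
def delta2 (f : ℝ → ℝ) (x h : ℝ) : ℝ := (f (x + h) - 2 * f x + f (x - h)) / h

/-- `M` is a bound for the Zygmund seminorm of `f`. -/
def ZygBound (f : ℝ → ℝ) (M : ℝ) : Prop := ∀ x h : ℝ, 0 < h → |delta2 f x h| ≤ M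

/-- `f` belongs to the Zygmund class `Λ_*`. -/
def MemZygmund (f : ℝ → ℝ) : Prop := Continuous f ∧ ∃ M, ZygBound f M

/-- The Zygmund seminorm `‖f‖_* = sup_{x, h>0} |Δ₂f(x,h)|`. -/
def zygNorm (f : ℝ → ℝ) : ℝ := sInf {M | 0 ≤ M ∧ ZygBound f M}

/-- Average of `g` over the interval `(a,b)`. -/
def intervalAvg (g : ℝ → ℝ) (a b : ℝ) : ℝ := (b - a)⁻¹ * ∫ t in a..b, g t

/-- `M` bounds the mean oscillation of `g` over all finite intervals. -/
def BMOBound (g : ℝ → ℝ) (M : ℝ) : Prop := ∀ a b : ℝ, a < b →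
  (∫⁻ x in Set.Ioo a b, ENNReal.ofReal ((g x - intervalAvg g a b)^2))
    ≤ ENNReal.ofReal (M^2 * (b - a))

/-- `g` has bounded mean oscillation. -/
def MemBMO (g : ℝ → ℝ) : Prop := LocallyIntegrable g volume ∧ ∃ M, BMOBound g M

/-- `f ∈ I(BMO)`: `f` is continuous and its distributional derivative is a BMO
function, i.e. `f` is a primitive of a BMO function. -/
def MemIBMO (f : ℝ → ℝ) : Prop := Continuous f ∧
  ∃ g : ℝ → ℝ, MemBMO g ∧ ∀ x, f x = f 0 + ∫ t in (0:ℝ)..x, g t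

/-- The set `A(f,ε) = {(x,h) : h > 0, |Δ₂f(x,h)| > ε}` in the upper half-plane. -/
def Aset (f : ℝ → ℝ) (ε : ℝ) : Set (ℝ × ℝ) := {p | 0 < p.2 ∧ ε < |delta2 f p.1 p.2|}

/-- `∫_I ∫_0^{|I|} χ_{A(f,ε)}(x,h) dh dx / h` for the interval `I = (a,b)`. -/
def Cquant (f : ℝ → ℝ) (ε a b : ℝ) : ℝ≥0∞ :=
  ∫⁻ x in Set.Ioo a b, ∫⁻ h in Set.Ioo 0 (b - a),
    (Aset f ε).indicator (fun _ => (1:ℝ≥0∞)) (x, h) / ENNReal.ofReal h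

/-- `C(f,ε) = sup_I (1/|I|) ∫_I ∫_0^{|I|} χ_{A(f,ε)} dh dx/h < ∞`. -/
def CFinite (f : ℝ → ℝ) (ε : ℝ) : Prop :=
  ∃ K : ℝ, ∀ a b : ℝ, a < b → Cquant f ε a b ≤ ENNReal.ofReal (K * (b - a))

/-- `dist(f, I(BMO)) = inf {‖f - g‖_* : g ∈ I(BMO)}`. -/
def distIBMO (f : ℝ → ℝ) : ℝ :=
  sInf {r | ∃ g, MemIBMO g ∧ r = zygNorm (fun x => f x - g x)}

/-- First divided difference `Δ₁f(x,h) = (f(x+h) - f(x))/h`. -/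
def delta1 (f : ℝ → ℝ) (x h : ℝ) : ℝ := (f (x + h) - f x) / h

/-- Estimate (2.3): for `|x - t| > h/2`,
`|Δ₁f(x,h) - Δ₁f(t,h)| ≤ C‖f‖_* log(|x-t|/h + 1)`. -/
lemma zyg_diff_bound {f : ℝ → ℝ} {M : ℝ} (hM : ZygBound f M)
    (x h : ℝ) (hh : 0 < h) : |f (x+h) - 2*f x + f (x-h)| ≤ M * h := by
  have h1 := hM x h hh
  rw [delta2, abs_div, abs_of_pos hh] at h1
  exact (div_le_iff₀ hh).mp h1

lemma chord {f : ℝ → ℝ} {M : ℝ} (hf : Continuous f) (hM : ZygBound f M)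
    (hM0 : 0 ≤ M) (a b : ℝ) (hab : a < b) :
    ∀ z ∈ Set.Icc a b, |f z - (f a + (f b - f a)/(b - a) * (z - a))| ≤ M * (b - a) / 2 := by
  set c0 := (f b - f a)/(b-a) with hc0
  set g : ℝ → ℝ := fun z => f z - (f a + c0 * (z - a)) with hg
  have hgc : Continuous g := by fun_prop
  have hga : g a = 0 := by simp [hg]
  have hgb : g b = 0 := by
    have hne : b - a ≠ 0 := sub_ne_zero.mpr hab.ne'
    simp only [hg, hc0]
    field_simp
    ring
  have hgZ : ∀ x h : ℝ, 0 < h → |g (x+h) - 2*g x + g (x-h)| ≤ M * h := by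
    intro x h hh
    have e : g (x+h) - 2*g x + g (x-h) = f (x+h) - 2*f x + f (x-h) := by
      simp only [hg]; ring
    rw [e]; exact zyg_diff_bound hM x h hh
  obtain ⟨z₀, hz₀, hmax⟩ := isCompact_Icc.exists_isMaxOn (Set.nonempty_Icc.mpr hab.le)
    ((continuous_abs.comp hgc).continuousOn : ContinuousOn (fun z => |g z|) (Set.Icc a b))
  have hT : ∀ z ∈ Set.Icc a b, |g z| ≤ |g z₀| := fun z hz => hmax hz
  have hTbound : |g z₀| ≤ M * (b - a) / 2 := by
    set r := min (z₀ - a) (b - z₀) with hr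
    rcases le_or_gt r 0 with h0 | h0
    · have hz0 : g z₀ = 0 := by
        rcases min_le_iff.mp h0 with h1 | h1
        · have : z₀ = a := by have := hz₀.1; linarith
          rw [this, hga]
        · have : z₀ = b := by have := hz₀.2; linarith
          rw [this, hgb]
      rw [hz0, abs_zero]
      nlinarith [sub_pos.mpr hab]
    · have hra : r ≤ z₀ - a := min_le_left _ _
      have hrb : r ≤ b - z₀ := min_le_right _ _
      have hkey := hgZ z₀ r h0
      have hmem1 : z₀ + r ∈ Set.Icc a b := ⟨by linarith [hz₀.1], by linarith⟩
      have hmem2 : z₀ - r ∈ Set.Icc a b := ⟨by linarith, by linarith [hz₀.2]⟩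
      have ha' : |g (z₀+r)| ≤ |g z₀| := hT _ hmem1
      have hb' : |g (z₀-r)| ≤ |g z₀| := hT _ hmem2
      have hrhalf : r ≤ (b - a)/2 := by
        have : 2*r ≤ (z₀ - a) + (b - z₀) := by linarith
        linarith
      have hMr : M * r ≤ M * ((b-a)/2) := mul_le_mul_of_nonneg_left hrhalf hM0
      have h2T : |g z₀| ≤ M * r := by
        rcases min_cases (z₀ - a) (b - z₀) with ⟨he, _⟩ | ⟨he, _⟩
        · -- r = z₀ - a, so z₀ - r = a, g (z₀ - r) = 0
          have hz : g (z₀ - r) = 0 := by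
            have : z₀ - r = a := by rw [hr, he]; ring
            rw [this, hga]
          have c1 := abs_sub (g (z₀+r)) (g (z₀+r) - 2*g z₀ + g (z₀-r))
          have e3 : g (z₀+r) - (g (z₀+r) - 2*g z₀ + g (z₀-r)) = 2 * g z₀ := by
            rw [hz]; ring
          rw [e3, abs_mul, abs_two] at c1
          have := abs_nonneg (g z₀)
          linarith
        · have hz : g (z₀ + r) = 0 := by
            have : z₀ + r = b := by rw [hr, he]; ring
            rw [this, hgb]
          have c1 := abs_sub (g (z₀-r)) (g (z₀+r) - 2*g z₀ + g (z₀-r))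
          have e3 : g (z₀-r) - (g (z₀+r) - 2*g z₀ + g (z₀-r)) = 2 * g z₀ := by
            rw [hz]; ring
          rw [e3, abs_mul, abs_two] at c1
          have := abs_nonneg (g z₀)
          linarith
      calc |g z₀| ≤ M * r := h2T
        _ ≤ M * ((b-a)/2) := hMr
        _ = M * (b - a) / 2 := by ring
  intro z hz
  have := hT z hz
  simp only [hg, hc0] at this ⊢
  linarith [hTbound]

lemma slope_sub {f : ℝ → ℝ} {M : ℝ} (hf : Continuous f) (hM : ZygBound f M)
    (hM0 : 0 ≤ M) (a L c u : ℝ)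
    (hu : 0 < u) (h1 : a ≤ c) (h2 : c + u ≤ a + L) :
    |delta1 f c u - delta1 f a L| ≤ M * L / u := by
  have hL : 0 < L := lt_of_lt_of_le hu (by linarith)
  have hch := chord hf hM hM0 a (a + L) (by linarith)
  have hb : a + L - a = L := by ring
  have e1 := hch c ⟨h1, by linarith⟩
  have e2 := hch (c+u) ⟨by linarith, by linarith⟩
  rw [hb] at e1 e2
  have key : delta1 f c u - delta1 f a L =
      ((f (c+u) - (f a + (f (a+L) - f a)/L * (c+u-a)))
       - (f c - (f a + (f (a+L) - f a)/L * (c-a)))) / u := by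
    rw [delta1, delta1]
    field_simp
    ring
  rw [key, abs_div, abs_of_pos hu]
  have tri : |(f (c+u) - (f a + (f (a+L) - f a)/L * (c+u-a)))
       - (f c - (f a + (f (a+L) - f a)/L * (c-a)))| ≤ M * L := by
    have := abs_sub (f (c+u) - (f a + (f (a+L) - f a)/L * (c+u-a)))
      (f c - (f a + (f (a+L) - f a)/L * (c-a)))
    linarith
  rw [div_le_div_iff₀ hu hu]
  nlinarith [abs_nonneg ((f (c+u) - (f a + (f (a+L) - f a)/L * (c+u-a)))
       - (f c - (f a + (f (a+L) - f a)/L * (c-a))))]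

lemma nested {f : ℝ → ℝ} {M : ℝ} (hf : Continuous f) (hM : ZygBound f M) (hM0 : 0 ≤ M) :
    ∀ n : ℕ, ∀ a L c u : ℝ, 0 < u → L ≤ 2^n * u → a ≤ c → c + u ≤ a + L →
    |delta1 f c u - delta1 f a L| ≤ 2*M*(n+1) := by
  intro n
  induction n with
  | zero =>
    intro a L c u hu hL2 hac hcu
    have hs := slope_sub hf hM hM0 a L c u hu hac hcu
    have hLu : L ≤ u := by norm_num at hL2; linarith
    have hd : M * L / u ≤ 2*M := by
      rw [div_le_iff₀ hu]; nlinarith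
    push_cast
    linarith
  | succ n ih =>
    intro a L c u hu hL2 hac hcu
    have hLpos : 0 < L := lt_of_lt_of_le hu (by linarith)
    have h2s : (2:ℝ)^(n+1) * u = 2 * (2^n * u) := by ring
    by_cases hcase : L ≤ 2*u
    · have hs := slope_sub hf hM hM0 a L c u hu hac hcu
      have hd : M * L / u ≤ 2*M := by
        rw [div_le_iff₀ hu]; nlinarith
      have hnn : (0:ℝ) ≤ 2*M*((n:ℝ)+1) := by positivity
      push_cast
      linarith
    · push_neg at hcase
      set a' := min c (a + L/2) with ha'
      have ha'c : a' ≤ c := min_le_left _ _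
      have ha'r : a' ≤ a + L/2 := min_le_right _ _
      have haa' : a ≤ a' := le_min hac (by linarith)
      have hcu' : c + u ≤ a' + L/2 := by
        rcases min_cases c (a + L/2) with ⟨he, hle⟩ | ⟨he, hle⟩
        · rw [ha', he]; linarith
        · rw [ha', he]; linarith
      have hhalf : L/2 ≤ 2^n * u := by
        rw [h2s] at hL2; linarith
      have ih' := ih a' (L/2) c u hu hhalf ha'c hcu'
      have hs := slope_sub hf hM hM0 a L a' (L/2) (by linarith) haa' (by linarith)
      have hdiv : M * L / (L/2) = 2*M := by
        field_simp
      rw [hdiv] at hs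
      have tri := abs_sub_le (delta1 f c u) (delta1 f a' (L/2)) (delta1 f a L)
      push_cast
      linarith

lemma key {f : ℝ → ℝ} {M : ℝ} (hf : Continuous f) (hM : ZygBound f M) (hM0 : 0 ≤ M)
    (x t h : ℝ) (hh : 0 < h) (htx : t < x) (hd : h/2 < x - t) :
    |delta1 f x h - delta1 f t h| ≤ 100 * M * Real.log ((x - t)/h + 1) := by
  set L := x - t + h with hL
  set ρ := (x - t)/h + 1 with hρ
  have hρL : L = ρ * h := by
    rw [hρ, hL]; field_simp
  have hρ32 : 3/2 < ρ := by
    rw [hρ]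
    have : 1/2 < (x - t)/h := by
      rw [lt_div_iff₀ hh]; linarith
    linarith
  have hρ1 : (1:ℝ) < ρ := lt_trans (by norm_num) hρ32
  set n := ⌊Real.logb 2 ρ⌋₊ + 1 with hn
  have hlogbnn : 0 ≤ Real.logb 2 ρ := Real.logb_nonneg (by norm_num) hρ1.le
  have hρ2n : ρ ≤ 2^n := by
    have h1 : Real.logb 2 ρ ≤ (n:ℝ) := by
      rw [hn]; push_cast
      exact (Nat.lt_floor_add_one _).le
    calc ρ = (2:ℝ) ^ Real.logb 2 ρ := (Real.rpow_logb (by norm_num) (by norm_num) (by linarith)).symm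
      _ ≤ (2:ℝ) ^ ((n:ℕ):ℝ) := Real.rpow_le_rpow_of_exponent_le (by norm_num) h1
      _ = 2^n := by rw [Real.rpow_natCast]
  have hL2n : L ≤ 2^n * h := by
    rw [hρL]
    exact mul_le_mul_of_nonneg_right hρ2n hh.le
  have e1 := nested hf hM hM0 n t L t h hh hL2n le_rfl (by rw [hL]; linarith)
  have e2 := nested hf hM hM0 n t L x h hh hL2n htx.le (by rw [hL]; linarith)
  have tri : |delta1 f x h - delta1 f t h| ≤ 4*M*((n:ℝ)+1) := by
    have := abs_sub_le (delta1 f x h) (delta1 f t L) (delta1 f t h)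
    have e1' : |delta1 f t L - delta1 f t h| = |delta1 f t h - delta1 f t L| := abs_sub_comm _ _
    linarith
  have hlogρpos : 0 < Real.log ρ := Real.log_pos hρ1
  have hlog13 : 1/3 ≤ Real.log ρ := by
    have h23 : Real.log ((2:ℝ)/3) ≤ 2/3 - 1 := Real.log_le_sub_one_of_pos (by norm_num)
    have hinv : Real.log ((3:ℝ)/2) = - Real.log ((2:ℝ)/3) := by
      rw [← Real.log_inv]; norm_num
    have hmono : Real.log ((3:ℝ)/2) ≤ Real.log ρ :=
      Real.log_le_log (by norm_num) hρ32.le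
    linarith
  have hlogb2 : Real.logb 2 ρ ≤ 2 * Real.log ρ := by
    rw [Real.logb, div_le_iff₀ (Real.log_pos (by norm_num : (1:ℝ) < 2))]
    nlinarith [Real.log_two_gt_d9, hlogρpos]
  have hn1 : (n:ℝ) + 1 ≤ Real.logb 2 ρ + 3 := by
    rw [hn]; push_cast
    linarith [Nat.floor_le hlogbnn]
  have h11 : (n:ℝ) + 1 ≤ 11 * Real.log ρ := by linarith
  have hstep := mul_le_mul_of_nonneg_left h11 (show (0:ℝ) ≤ 4*M by linarith)
  have hML : 0 ≤ M * Real.log ρ := mul_nonneg hM0 hlogρpos.le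
  calc |delta1 f x h - delta1 f t h| ≤ 4*M*((n:ℝ)+1) := tri
    _ ≤ 4*M*(11 * Real.log ρ) := hstep
    _ ≤ 100 * M * Real.log ρ := by nlinarith


theorem stmt6 : ∃ C > (0:ℝ), ∀ f : ℝ → ℝ, MemZygmund f →
    ∀ x t h : ℝ, 0 < h → h / 2 < |x - t| →
    |delta1 f x h - delta1 f t h| ≤ C * zygNorm f * Real.log (|x - t| / h + 1) := by
  refine ⟨100, by norm_num, ?_⟩
  intro f hf x t h hh hd
  obtain ⟨hcont, M₀, hM₀⟩ := hf
  have hne : ({M | 0 ≤ M ∧ ZygBound f M}).Nonempty :=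
    ⟨max M₀ 0, le_max_right _ _, fun y k hk => (hM₀ y k hk).trans (le_max_left _ _)⟩
  have hM : ZygBound f (zygNorm f) := by
    intro y k hk
    exact le_csInf hne (fun b hb => hb.2 y k hk)
  have hM0 : 0 ≤ zygNorm f := le_csInf hne (fun b hb => hb.1)
  have hxt : x ≠ t := by
    intro hxt
    rw [hxt, sub_self, abs_zero] at hd
    linarith
  rcases lt_or_gt_of_ne hxt with hlt | hgt
  · have habs : |x - t| = t - x := by
      rw [abs_of_neg (by linarith : x - t < 0)]; ring
    rw [habs] at hd ⊢
    rw [abs_sub_comm]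
    exact key hcont hM hM0 t x h hh hlt hd
  · have habs : |x - t| = x - t := abs_of_pos (by linarith : 0 < x - t)
    rw [habs] at hd ⊢
    exact key hcont hM hM0 x t h hh hgt hd
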